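/- Let (Ω, F, P) be a probability space with a filtration (F_t)_{t≥0}, let p₁, …, p_k be random variables with values in (0,1], and let H₀ ⊆ {1,…,k}. For each t ≤ k, let α_t and λ_t be F_{t−1}-measurable random variables with values in (0,1), define R_t = 𝟙{p_t ≤ α_t} and C_t = 𝟙{p_t ≤ λ_t}, and assume R_t and C_t are F_t-measurable. Assume that for every j ∈ H₀ and every F_{j−1}-measurable random variable a with values in [0,1], P(p_j ≤ a | F_{j−1}) ≤ a almost surely. Then for every t ≤ k, E[Σ_{j≤t, j∈H₀} α_j·𝟙{p_j > λ_j}/(1 − λ_j)] ≥ E[Σ_{j≤t, j∈H₀} R_j]. -/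

import Mathlib

open MeasureTheory ProbabilityTheory Real

lemma saffron_key_step {Ω : Type*} {m F : MeasurableSpace Ω} (hm : m ≤ F)
    (P : Measure Ω) [IsProbabilityMeasure P]
    {C lam h : Ω → ℝ} (hC_int : Integrable C P)
    (hC0 : ∀ ω, 0 ≤ C ω) (hC1 : ∀ ω, C ω ≤ 1)
    (hlam0 : ∀ ω, 0 ≤ lam ω) (hlam1 : ∀ ω, lam ω ≤ 1)
    (hlam_meas : Measurable[m] lam)
    (hcond : ∀ᵐ ω ∂P, (P[C | m]) ω ≤ lam ω)
    (hh : StronglyMeasurable[m] h) (hh0 : ∀ ω, 0 ≤ h ω) {M : ℝ}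
    (hhM : ∀ ω, h ω ≤ M) :
    ∫ ω, h ω * (1 - lam ω) ∂P ≤ ∫ ω, h ω * (1 - C ω) ∂P := by
  have hsm : AEStronglyMeasurable h P := (hh.mono hm).aestronglyMeasurable
  have bound : ∀ (g : Ω → ℝ), (∀ ω, 0 ≤ g ω) → (∀ ω, g ω ≤ 1) →
      AEStronglyMeasurable g P → Integrable (fun ω => h ω * (1 - g ω)) P := by
    intro g hg0 hg1 hgm
    refine Integrable.mono' (integrable_const |M|)
      (hsm.mul (aestronglyMeasurable_const.sub hgm))
      (Filter.Eventually.of_forall fun ω => ?_)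
    have h0 : (0:ℝ) ≤ h ω * (1 - g ω) := mul_nonneg (hh0 ω) (by linarith [hg1 ω])
    rw [Real.norm_eq_abs, abs_of_nonneg h0]
    calc h ω * (1 - g ω) ≤ M * 1 :=
          mul_le_mul (hhM ω) (by linarith [hg0 ω]) (by linarith [hg1 ω])
            (le_trans (hh0 ω) (hhM ω))
      _ ≤ |M| := by rw [mul_one]; exact le_abs_self M
  have hint : Integrable (fun ω => h ω * (1 - C ω)) P :=
    bound C hC0 hC1 hC_int.aestronglyMeasurable
  have hint2 : Integrable (fun ω => h ω * (1 - lam ω)) P :=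
    bound lam hlam0 hlam1 (hlam_meas.mono hm le_rfl).aestronglyMeasurable
  have h1C : Integrable (fun ω => 1 - C ω) P := (integrable_const 1).sub hC_int
  -- conditional expectation computation
  have hpull : P[(fun ω => h ω * (1 - C ω)) | m] =ᵐ[P] fun ω => h ω * (P[(fun ω' => 1 - C ω') | m]) ω := by
    have := condExp_mul_of_stronglyMeasurable_left (μ := P) (m := m) hh
      (by exact hint) h1C
    exact this
  have hsub : P[(fun ω' => 1 - C ω') | m] =ᵐ[P] fun ω => 1 - (P[C | m]) ω := by
    have h1 : P[(fun _ : Ω => (1:ℝ)) | m] = fun _ => (1:ℝ) := condExp_const (μ := P) hm 1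
    have h2 := condExp_sub (m := m) (μ := P) (integrable_const (1:ℝ)) hC_int
    filter_upwards [h2] with ω hω2
    have : (P[(fun ω' => 1 - C ω') | m]) ω = (P[(fun _ : Ω => (1:ℝ)) - C | m]) ω := by
      congr 1
    rw [this, hω2, Pi.sub_apply, h1]
  have key : ∀ᵐ ω ∂P, h ω * (1 - lam ω) ≤ (P[(fun ω => h ω * (1 - C ω)) | m]) ω := by
    filter_upwards [hpull, hsub, hcond] with ω h1 h2 h3
    rw [h1, h2]
    exact mul_le_mul_of_nonneg_left (by linarith) (hh0 ω)
  calc ∫ ω, h ω * (1 - lam ω) ∂P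
      ≤ ∫ ω, (P[(fun ω => h ω * (1 - C ω)) | m]) ω ∂P :=
        integral_mono_ae hint2 integrable_condExp key
    _ = ∫ ω, h ω * (1 - C ω) ∂P := integral_condExp hm


lemma saffron_per_index {Ω : Type*} {m F : MeasurableSpace Ω} (hm : m ≤ F)
    (P : Measure Ω) [IsProbabilityMeasure P]
    {α lam C : Ω → ℝ}
    (hα_meas : Measurable[m] α) (hlam_meas : Measurable[m] lam)
    (hα_range : ∀ ω, α ω ∈ Set.Ioo (0:ℝ) 1) (hlam_range : ∀ ω, lam ω ∈ Set.Ioo (0:ℝ) 1)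
    (hC_int : Integrable C P) (hC0 : ∀ ω, 0 ≤ C ω) (hC1 : ∀ ω, C ω ≤ 1)
    (hcond : ∀ᵐ ω ∂P, (P[C | m]) ω ≤ lam ω) :
    ENNReal.ofReal (∫ ω, α ω ∂P) ≤
      ∫⁻ ω, ENNReal.ofReal (α ω * (1 - C ω) / (1 - lam ω)) ∂P := by
  have hαF : Measurable α := hα_meas.mono hm le_rfl
  have hlamF : Measurable lam := hlam_meas.mono hm le_rfl
  have hlam_lt : ∀ ω, 0 < 1 - lam ω := fun ω => by linarith [(hlam_range ω).2]
  have hlam_ne : ∀ ω, 1 - lam ω ≠ 0 := fun ω => (hlam_lt ω).ne'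
  set hM : ℕ → Ω → ℝ := fun M ω => min (α ω / (1 - lam ω)) M with hMdef
  have hM_meas : ∀ M, StronglyMeasurable[m] (hM M) := fun M =>
    ((hα_meas.div (measurable_const.sub hlam_meas)).min measurable_const).stronglyMeasurable
  have hM0 : ∀ M ω, 0 ≤ hM M ω := fun M ω =>
    le_min (div_nonneg (hα_range ω).1.le (hlam_lt ω).le) (Nat.cast_nonneg M)
  have hMb : ∀ M ω, hM M ω ≤ M := fun M ω => min_le_right _ _
  -- step: ∫ hM M * (1 - lam) ≤ ∫ hM M * (1 - C)
  have step : ∀ M : ℕ, ∫ ω, hM M ω * (1 - lam ω) ∂P ≤ ∫ ω, hM M ω * (1 - C ω) ∂P :=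
    fun M => saffron_key_step hm P hC_int hC0 hC1
      (fun ω => (hlam_range ω).1.le) (fun ω => (hlam_range ω).2.le) hlam_meas hcond
      (hM_meas M) (hM0 M) (hMb M)
  -- hM M ω * (1 - lam ω) = min (α ω) (M * (1 - lam ω))
  have hmin : ∀ M : ℕ, ∀ ω, hM M ω * (1 - lam ω) = min (α ω) (M * (1 - lam ω)) := by
    intro M ω
    rw [hMdef]
    rw [min_mul_of_nonneg _ _ (hlam_lt ω).le, div_mul_cancel₀ _ (hlam_ne ω)]
  -- integrability of min (α) (M (1-lam))
  have hmin_int : ∀ M : ℕ, Integrable (fun ω => min (α ω) (M * (1 - lam ω))) P := by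
    intro M
    refine Integrable.mono' (integrable_const 1)
      ((hαF.min ((measurable_const.mul (measurable_const.sub hlamF)))).aestronglyMeasurable)
      (Filter.Eventually.of_forall fun ω => ?_)
    rw [Real.norm_eq_abs, abs_of_nonneg (le_min (hα_range ω).1.le
      (mul_nonneg (Nat.cast_nonneg M) (hlam_lt ω).le))]
    exact le_trans (min_le_left _ _) (hα_range ω).2.le
  -- integrability and nonnegativity of hM M * (1 - C)
  have hg_int : ∀ M : ℕ, Integrable (fun ω => hM M ω * (1 - C ω)) P := by
    intro M
    refine Integrable.mono' (integrable_const (M:ℝ))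
      ((((hM_meas M).mono hm).aestronglyMeasurable).mul
        (aestronglyMeasurable_const.sub hC_int.aestronglyMeasurable))
      (Filter.Eventually.of_forall fun ω => ?_)
    have h0 : (0:ℝ) ≤ hM M ω * (1 - C ω) := mul_nonneg (hM0 M ω) (by linarith [hC1 ω])
    rw [Real.norm_eq_abs, abs_of_nonneg h0]
    calc hM M ω * (1 - C ω) ≤ (M:ℝ) * 1 :=
          mul_le_mul (hMb M ω) (by linarith [hC0 ω]) (by linarith [hC1 ω])
            (le_trans (hM0 M ω) (hMb M ω))
      _ = (M:ℝ) := mul_one _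
  calc ENNReal.ofReal (∫ ω, α ω ∂P)
      = ∫⁻ ω, ENNReal.ofReal (α ω) ∂P := by
        refine ofReal_integral_eq_lintegral_ofReal ?_ (Filter.Eventually.of_forall fun ω => (hα_range ω).1.le)
        refine Integrable.mono' (integrable_const 1) hαF.aestronglyMeasurable
          (Filter.Eventually.of_forall fun ω => ?_)
        rw [Real.norm_eq_abs, abs_of_nonneg (hα_range ω).1.le]
        exact (hα_range ω).2.le
    _ = ∫⁻ ω, ⨆ M : ℕ, ENNReal.ofReal (min (α ω) (M * (1 - lam ω))) ∂P := by
        refine lintegral_congr fun ω => ?_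
        refine le_antisymm ?_ (iSup_le fun M => ENNReal.ofReal_le_ofReal (min_le_left _ _))
        obtain ⟨M, hMge⟩ := exists_nat_ge (α ω / (1 - lam ω))
        refine le_iSup_of_le M (le_of_eq ?_)
        rw [min_eq_left ((div_le_iff₀ (hlam_lt ω)).mp hMge)]
    _ = ⨆ M : ℕ, ∫⁻ ω, ENNReal.ofReal (min (α ω) (M * (1 - lam ω))) ∂P := by
        refine (lintegral_iSup (μ := P) (f := fun M ω => ENNReal.ofReal (min (α ω) (M * (1 - lam ω))))
          (fun M => ?_) (fun M N hMN ω => ?_))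
        · exact (hαF.min (measurable_const.mul (measurable_const.sub hlamF))).ennreal_ofReal
        · exact ENNReal.ofReal_le_ofReal (min_le_min le_rfl
            (mul_le_mul_of_nonneg_right (Nat.cast_le.mpr hMN) (hlam_lt ω).le))
    _ ≤ ⨆ M : ℕ, ∫⁻ ω, ENNReal.ofReal (hM M ω * (1 - C ω)) ∂P := by
        refine iSup_mono fun M => ?_
        rw [← ofReal_integral_eq_lintegral_ofReal (hmin_int M)
            (Filter.Eventually.of_forall fun ω => le_min (hα_range ω).1.le
              (mul_nonneg (Nat.cast_nonneg M) (hlam_lt ω).le)),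
          ← ofReal_integral_eq_lintegral_ofReal (hg_int M)
            (Filter.Eventually.of_forall fun ω => mul_nonneg (hM0 M ω) (by linarith [hC1 ω]))]
        refine ENNReal.ofReal_le_ofReal ?_
        calc ∫ ω, min (α ω) (M * (1 - lam ω)) ∂P
            = ∫ ω, hM M ω * (1 - lam ω) ∂P := by
              refine integral_congr_ae (Filter.Eventually.of_forall fun ω => (hmin M ω).symm)
          _ ≤ _ := step M
    _ ≤ ∫⁻ ω, ENNReal.ofReal (α ω * (1 - C ω) / (1 - lam ω)) ∂P := by
        refine iSup_le fun M => lintegral_mono fun ω => ENNReal.ofReal_le_ofReal ?_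
        rw [mul_div_right_comm]
        exact mul_le_mul_of_nonneg_right (min_le_left _ _) (by linarith [hC1 ω])

theorem saffron_false_rejection_bound {Ω : Type*} {F : MeasurableSpace Ω} (P : Measure Ω)
    [IsProbabilityMeasure P] (ℱ : Filtration ℕ F) (k : ℕ) (hk : 1 ≤ k)
    (p : ℕ → Ω → ℝ) (hp_meas : ∀ j, Measurable (p j))
    (hp_range : ∀ j ω, p j ω ∈ Set.Ioc (0 : ℝ) 1)
    (H₀ : Finset ℕ) (hH₀ : H₀ ⊆ Finset.Icc 1 k)
    (αf lamf : ℕ → Ω → ℝ)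
    (hαf_meas : ∀ j, Measurable[ℱ (j - 1)] (αf j))
    (hlamf_meas : ∀ j, Measurable[ℱ (j - 1)] (lamf j))
    (hαf_range : ∀ j ω, αf j ω ∈ Set.Ioo (0 : ℝ) 1)
    (hlamf_range : ∀ j ω, lamf j ω ∈ Set.Ioo (0 : ℝ) 1)
    -- `R_j = 𝟙{p_j ≤ α_j}` and `C_j = 𝟙{p_j ≤ λ_j}` are `F_j`-measurable
    (hR_meas : ∀ j, MeasurableSet[ℱ j] {ω | p j ω ≤ αf j ω})
    (hC_meas : ∀ j, MeasurableSet[ℱ j] {ω | p j ω ≤ lamf j ω})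
    -- conditional super-uniformity of the null p-values
    (h_su : ∀ j ∈ H₀, ∀ a : Ω → ℝ, Measurable[ℱ (j - 1)] a →
      (∀ ω, a ω ∈ Set.Icc (0 : ℝ) 1) →
      ∀ᵐ ω ∂P, (P[Set.indicator {ω' | p j ω' ≤ a ω'} (fun _ => (1 : ℝ)) | ℱ (j - 1)]) ω ≤ a ω) :
    ∀ t ≤ k,
      ∫⁻ ω, ENNReal.ofReal
          (∑ j ∈ (Finset.Icc 1 t).filter (· ∈ H₀),
            αf j ω * (if lamf j ω < p j ω then (1 : ℝ) else 0) / (1 - lamf j ω)) ∂P ≥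
        ∫⁻ ω, ENNReal.ofReal
          (∑ j ∈ (Finset.Icc 1 t).filter (· ∈ H₀),
            (if p j ω ≤ αf j ω then (1 : ℝ) else 0)) ∂P := by
  intro t ht
  rw [ge_iff_le]
  set s := (Finset.Icc 1 t).filter (· ∈ H₀) with hs
  have hαF : ∀ j, Measurable (αf j) := fun j => (hαf_meas j).mono (ℱ.le _) le_rfl
  have hlamF : ∀ j, Measurable (lamf j) := fun j => (hlamf_meas j).mono (ℱ.le _) le_rfl
  have hlam_lt : ∀ j ω, 0 < 1 - lamf j ω := fun j ω => by linarith [(hlamf_range j ω).2]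
  -- terms
  have hg_meas : ∀ j, Measurable (fun ω => αf j ω *
      (if lamf j ω < p j ω then (1:ℝ) else 0) / (1 - lamf j ω)) := fun j =>
    ((hαF j).mul (Measurable.ite (measurableSet_lt (hlamF j) (hp_meas j))
      measurable_const measurable_const)).div (measurable_const.sub (hlamF j))
  have hg_nonneg : ∀ j ω, 0 ≤ αf j ω *
      (if lamf j ω < p j ω then (1:ℝ) else 0) / (1 - lamf j ω) := fun j ω =>
    div_nonneg (mul_nonneg (hαf_range j ω).1.le (by positivity)) (hlam_lt j ω).le
  have hr_meas : ∀ j, Measurable (fun ω => if p j ω ≤ αf j ω then (1:ℝ) else 0) := fun j =>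
    Measurable.ite (ℱ.le j _ (hR_meas j)) measurable_const measurable_const
  have hr_nonneg : ∀ (j : ℕ) (ω : Ω), (0:ℝ) ≤ if p j ω ≤ αf j ω then (1:ℝ) else 0 :=
    fun j ω => by positivity
  rw [lintegral_congr (fun ω => ENNReal.ofReal_sum_of_nonneg (fun j _ => hg_nonneg j ω)),
    lintegral_congr (fun ω => ENNReal.ofReal_sum_of_nonneg (fun j _ => hr_nonneg j ω)),
    lintegral_finset_sum s (fun j _ => (hg_meas j).ennreal_ofReal),
    lintegral_finset_sum s (fun j _ => (hr_meas j).ennreal_ofReal)]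
  refine Finset.sum_le_sum fun j hj => ?_
  have hjH : j ∈ H₀ := (Finset.mem_filter.mp hj).2
  have hm : ℱ (j - 1) ≤ F := ℱ.le (j - 1)
  -- integrability of αf j
  have hα_int : Integrable (αf j) P := by
    refine Integrable.mono' (integrable_const 1) (hαF j).aestronglyMeasurable
      (Filter.Eventually.of_forall fun ω => ?_)
    rw [Real.norm_eq_abs, abs_of_nonneg (hαf_range j ω).1.le]
    exact (hαf_range j ω).2.le
  -- the rejection indicator
  set R : Ω → ℝ := Set.indicator {ω' | p j ω' ≤ αf j ω'} (fun _ => (1:ℝ)) with hRdef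
  have hR_eq : ∀ ω, (if p j ω ≤ αf j ω then (1:ℝ) else 0) = R ω := fun ω => by
    simp [hRdef, Set.indicator_apply, Set.mem_setOf_eq]
  have hR_int : Integrable R P := (integrable_const 1).indicator (ℱ.le j _ (hR_meas j))
  have left : ∫⁻ ω, ENNReal.ofReal (if p j ω ≤ αf j ω then (1:ℝ) else 0) ∂P ≤
      ENNReal.ofReal (∫ ω, αf j ω ∂P) := by
    have h1 : ∫⁻ ω, ENNReal.ofReal (if p j ω ≤ αf j ω then (1:ℝ) else 0) ∂P =
        ENNReal.ofReal (∫ ω, R ω ∂P) := by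
      rw [lintegral_congr fun ω => by rw [hR_eq ω]]
      exact (ofReal_integral_eq_lintegral_ofReal hR_int
        (Filter.Eventually.of_forall fun ω => Set.indicator_nonneg (fun _ _ => zero_le_one) ω)).symm
    rw [h1]
    refine ENNReal.ofReal_le_ofReal ?_
    have h2 : ∫ ω, R ω ∂P = ∫ ω, (P[R | ℱ (j - 1)]) ω ∂P := (integral_condExp hm).symm
    rw [h2]
    exact integral_mono_ae integrable_condExp hα_int
      (h_su j hjH (αf j) (hαf_meas j)
        (fun ω => ⟨(hαf_range j ω).1.le, (hαf_range j ω).2.le⟩))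
  -- the candidate indicator
  set C : Ω → ℝ := Set.indicator {ω' | p j ω' ≤ lamf j ω'} (fun _ => (1:ℝ)) with hCdef
  have hC_int : Integrable C P := (integrable_const 1).indicator (ℱ.le j _ (hC_meas j))
  have hC0 : ∀ ω, 0 ≤ C ω := fun ω => Set.indicator_nonneg (fun _ _ => zero_le_one) ω
  have hC1 : ∀ ω, C ω ≤ 1 := fun ω => by
    simp only [hCdef, Set.indicator_apply]; split_ifs <;> norm_num
  have hC_eq : ∀ ω, (if lamf j ω < p j ω then (1:ℝ) else 0) = 1 - C ω := fun ω => by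
    by_cases h : lamf j ω < p j ω
    · simp [hCdef, Set.indicator_apply, Set.mem_setOf_eq, h, not_le.mpr h]
    · simp [hCdef, Set.indicator_apply, Set.mem_setOf_eq, h, not_lt.mp h]
  have hcond := h_su j hjH (lamf j) (hlamf_meas j)
    (fun ω => ⟨(hlamf_range j ω).1.le, (hlamf_range j ω).2.le⟩)
  have right := saffron_per_index hm P (hαf_meas j) (hlamf_meas j)
    (hαf_range j) (hlamf_range j) hC_int hC0 hC1 hcond
  refine le_trans left (le_trans right (le_of_eq (lintegral_congr fun ω => ?_)))
  rw [hC_eq ω]
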